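/- For all integers n ≥ 1 and a ≥ 1: ∑ over all tuples (m_1, …, m_{2a}) of non-negative integers with m_1 + ⋯ + m_{2a} = n of (−1)^{1+|λ|} · (n − m_{2a}) · M(n; m_1, …, m_{2a}) · C(|λ|+n+1, |λ|+1)/(|λ|+n+1) equals a^{n−1}, where |λ| = m_1 + 2m_2 + ⋯ + 2a·m_{2a}. -/

import Mathlib

open Finset Polynomial

set_option maxRecDepth 8000

namespace Stmt11Aux

noncomputable def V (a : ℕ) : ℚ[X] := ∑ k ∈ Finset.range a, (1 + X) ^ (2 * k + 1)

noncomputable def p (a : ℕ) (j : Fin (2 * a)) : ℚ[X] := (-(1 + X)) ^ (j.1 + 1)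

noncomputable def P (a : ℕ) : ℚ[X] := ∑ j : Fin (2 * a), p a j

lemma P_eq (a : ℕ) : P a = X * V a := by
  rw [P, V]
  simp only [p]
  rw [Fin.sum_univ_eq_sum_range (fun j => (-(1 + X : ℚ[X])) ^ (j + 1))]
  induction a with
  | zero => simp
  | succ a ih =>
    have h2 : 2 * (a + 1) = 2 * a + 1 + 1 := by ring
    rw [h2, Finset.sum_range_succ, Finset.sum_range_succ, ih, Finset.sum_range_succ, mul_add]
    have hodd : Odd (2 * a + 1) := ⟨a, by ring⟩
    have heven : Even (2 * a + 1 + 1) := ⟨a + 1, by ring⟩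
    rw [hodd.neg_pow, heven.neg_pow, pow_succ (1 + X : ℚ[X]) (2 * a + 1)]
    ring

lemma S1 (a n : ℕ) :
    ∑ m ∈ piAntidiag (univ : Finset (Fin (2 * a))) n,
      (Nat.multinomial univ m : ℚ[X]) * ∏ j, p a j ^ m j = P a ^ n := by
  rw [P, ← Finset.sum_pow_eq_sum_piAntidiag]

lemma S2 (a n : ℕ) (t : Fin (2 * a)) :
    ∑ m ∈ piAntidiag (univ : Finset (Fin (2 * a))) n,
      (Nat.multinomial univ m : ℚ[X]) * (m t : ℚ[X]) * ∏ j, p a j ^ m j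
      = (n : ℚ[X]) * p a t * P a ^ (n - 1) := by
  classical
  set q : Fin (2 * a) → (ℚ[X])[X] := fun j => C (p a j) * (if j = t then X else 1) with hq
  have hprod : ∀ m : Fin (2 * a) → ℕ,
      ∏ j, q j ^ m j = C (∏ j, p a j ^ m j) * X ^ m t := by
    intro m
    have : ∀ j : Fin (2 * a), q j ^ m j = C (p a j ^ m j) * (if j = t then X else 1) ^ m j := by
      intro j; rw [hq]; rw [mul_pow, C_pow]
    rw [Finset.prod_congr rfl fun j _ => this j, Finset.prod_mul_distrib, ← map_prod]
    congr 1
    rw [Finset.prod_eq_single t (fun j _ hj => by simp [hj]) (by simp)]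
    simp
  have key : (∑ j, q j) ^ n = ∑ m ∈ piAntidiag (univ : Finset (Fin (2 * a))) n,
      C ((Nat.multinomial univ m : ℚ[X]) * ∏ j, p a j ^ m j) * X ^ m t := by
    rw [Finset.sum_pow_eq_sum_piAntidiag]
    refine Finset.sum_congr rfl fun m _ => ?_
    rw [hprod m, map_mul, C_eq_natCast, mul_assoc]
  have hdq : derivative (∑ j, q j) = C (p a t) := by
    rw [map_sum]
    rw [Finset.sum_eq_single t (fun j _ hj => by simp [hq, if_neg hj]) (by simp)]
    simp [hq, derivative_C_mul_X]
  have hev : (∑ j, q j).eval 1 = P a := by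
    rw [eval_finset_sum, P]
    refine Finset.sum_congr rfl fun j _ => ?_
    by_cases h : j = t <;> simp [hq, h]
  have hL : (derivative ((∑ j, q j) ^ n)).eval 1 = (n : ℚ[X]) * P a ^ (n - 1) * p a t := by
    rw [derivative_pow, hdq, eval_mul, eval_mul, eval_C, eval_pow, hev, eval_C]
  have hR : (derivative ((∑ j, q j) ^ n)).eval 1
      = ∑ m ∈ piAntidiag (univ : Finset (Fin (2 * a))) n,
        (Nat.multinomial univ m : ℚ[X]) * (m t : ℚ[X]) * ∏ j, p a j ^ m j := by
    rw [key, map_sum, eval_finset_sum]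
    refine Finset.sum_congr rfl fun m _ => ?_
    rw [derivative_C_mul, derivative_X_pow, eval_mul, eval_C, eval_mul, eval_C, eval_pow, eval_X]
    ring
  rw [← hR, hL]; ring

lemma S3 (a n : ℕ) (t : Fin (2 * a)) :
    ∑ m ∈ piAntidiag (univ : Finset (Fin (2 * a))) n,
      C ((Nat.multinomial univ m : ℚ) * ((n : ℚ) - (m t : ℚ))) * ∏ j, p a j ^ m j
      = (n : ℚ[X]) * P a ^ n - (n : ℚ[X]) * p a t * P a ^ (n - 1) := by
  have hterm : ∀ m : Fin (2 * a) → ℕ,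
      C ((Nat.multinomial univ m : ℚ) * ((n : ℚ) - (m t : ℚ))) * ∏ j, p a j ^ m j
        = (n : ℚ[X]) * ((Nat.multinomial univ m : ℚ[X]) * ∏ j, p a j ^ m j)
          - (Nat.multinomial univ m : ℚ[X]) * (m t : ℚ[X]) * ∏ j, p a j ^ m j := by
    intro m
    simp only [map_mul, map_sub, map_natCast]
    ring
  rw [Finset.sum_congr rfl fun m _ => hterm m, Finset.sum_sub_distrib, ← Finset.mul_sum,
    S1 a n, S2 a n t]

lemma coeffA (a n : ℕ) (m : Fin (2 * a) → ℕ) :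
    ((1 + X : ℚ[X]) ^ n * ∏ j, p a j ^ m j).coeff (n - 1)
      = (-1 : ℚ) ^ (∑ i : Fin (2 * a), (i.1 + 1) * m i)
        * (((∑ i : Fin (2 * a), (i.1 + 1) * m i) + n).choose (n - 1) : ℚ) := by
  have h1 : ∏ j, p a j ^ m j
      = C ((-1 : ℚ) ^ (∑ i : Fin (2 * a), (i.1 + 1) * m i))
        * (1 + X) ^ (∑ i : Fin (2 * a), (i.1 + 1) * m i) := by
    have e1 : ∀ j : Fin (2 * a), p a j ^ m j = (-(1 + X : ℚ[X])) ^ ((j.1 + 1) * m j) := by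
      intro j; rw [p, ← pow_mul]
    rw [Finset.prod_congr rfl fun j _ => e1 j,
      Finset.prod_pow_eq_pow_sum univ (fun j : Fin (2 * a) => (j.1 + 1) * m j) (-(1 + X : ℚ[X])),
      neg_pow, map_pow, map_neg, map_one]
  rw [h1, show (1 + X : ℚ[X]) ^ n * (C ((-1:ℚ) ^ (∑ i : Fin (2 * a), (i.1 + 1) * m i))
      * (1 + X) ^ (∑ i : Fin (2 * a), (i.1 + 1) * m i))
      = C ((-1:ℚ) ^ (∑ i : Fin (2 * a), (i.1 + 1) * m i))
        * (1 + X) ^ ((∑ i : Fin (2 * a), (i.1 + 1) * m i) + n) by rw [pow_add]; ring]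
  rw [coeff_C_mul, coeff_one_add_X_pow]

lemma chooseB (S n : ℕ) (hn : 1 ≤ n) :
    ((S + n + 1).choose (S + 1) : ℚ) / ((S : ℚ) + n + 1) = ((S + n).choose (n - 1) : ℚ) / n := by
  have key : (S + n + 1) * (S + n).choose (n - 1) = (S + n + 1).choose (S + 1) * n := by
    have h1 := Nat.add_one_mul_choose_eq (S + n) (n - 1)
    simp -failIfUnchanged only [Nat.succ_eq_add_one] at h1
    have h2 : n - 1 + 1 = n := by omega
    rw [h2] at h1
    have h3 : (S + n + 1).choose n = (S + n + 1).choose (S + 1) := by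
      have h4 : S + 1 = (S + n + 1) - n := by omega
      rw [h4, Nat.choose_symm (by omega)]
    rw [h1, h3]
  have hd1 : ((S : ℚ) + n + 1) ≠ 0 := by positivity
  have hd2 : (n : ℚ) ≠ 0 := by exact_mod_cast Nat.one_le_iff_ne_zero.mp hn
  rw [div_eq_div_iff hd1 hd2]
  have hk := congrArg (fun x : ℕ => (x : ℚ)) key
  push_cast at hk ⊢
  linarith [hk]

end Stmt11Aux

open Stmt11Aux

set_option maxRecDepth 8000 in
/-- Identity (3.3), the key identity in the proof of the third Geode conjecture:
for integers `n ≥ 1` and `a ≥ 1`, summing over all tuples `(m_1, …, m_{2a})` of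
non-negative integers with `m_1 + ⋯ + m_{2a} = n`,
`∑ (−1)^{1+|λ|} · (n − m_{2a}) · M(n; m_1,…,m_{2a}) · C(|λ|+n+1, |λ|+1)/(|λ|+n+1) = a^{n−1}`,
where `|λ| = m_1 + 2m_2 + ⋯ + 2a·m_{2a}`. -/
theorem stmt_11 (n a : ℕ) (hn : 1 ≤ n) (ha : 1 ≤ a) :
    ∑ m ∈ Finset.Nat.antidiagonalTuple (2 * a) n,
      (-1 : ℚ) ^ (1 + ∑ i : Fin (2 * a), (i.val + 1) * m i) *
        ((n : ℚ) - (m ⟨2 * a - 1, by omega⟩ : ℚ)) *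
        (Nat.multinomial Finset.univ m : ℚ) *
        (((∑ i : Fin (2 * a), (i.val + 1) * m i) + n + 1).choose
            ((∑ i : Fin (2 * a), (i.val + 1) * m i) + 1) : ℚ) /
        (((∑ i : Fin (2 * a), (i.val + 1) * m i) : ℚ) + n + 1)
      = (a : ℚ) ^ (n - 1) := by
  classical
  have ha2 : 2 * a - 1 < 2 * a := by omega
  have hn0 : (n : ℚ) ≠ 0 := by exact_mod_cast Nat.one_le_iff_ne_zero.mp hn
  have hset : Finset.Nat.antidiagonalTuple (2 * a) n
      = piAntidiag (univ : Finset (Fin (2 * a))) n := by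
    ext m
    simp [Finset.Nat.mem_antidiagonalTuple, Finset.mem_piAntidiag]
  rw [hset]
  refine Eq.trans (Finset.sum_congr rfl fun m _ => ?_)
    (?_ : ∑ m ∈ piAntidiag (univ : Finset (Fin (2 * a))) n,
      (-(1 : ℚ) / n) * (((Nat.multinomial Finset.univ m : ℚ)
          * ((n : ℚ) - (m ⟨2 * a - 1, ha2⟩ : ℚ)))
        * (((1 + X : ℚ[X]) ^ n * ∏ j, p a j ^ m j).coeff (n - 1))) = (a : ℚ) ^ (n - 1))
  · -- per-term rewrite
    set S := ∑ i : Fin (2 * a), (i.val + 1) * m i with hS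
    have hD : (∑ i : Fin (2 * a), ((i.val : ℚ) + 1) * (m i : ℚ)) = (S : ℚ) := by
      rw [hS]; push_cast; ring
    rw [coeffA a n m, ← hS, hD, mul_div_assoc, chooseB S n hn, pow_add, pow_one]
    ring
  · have hcoeff : ∀ m : Fin (2 * a) → ℕ,
        ((Nat.multinomial Finset.univ m : ℚ) * ((n : ℚ) - (m ⟨2 * a - 1, ha2⟩ : ℚ)))
            * (((1 + X : ℚ[X]) ^ n * ∏ j, p a j ^ m j).coeff (n - 1))
        = (C ((Nat.multinomial Finset.univ m : ℚ) * ((n : ℚ) - (m ⟨2 * a - 1, ha2⟩ : ℚ)))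
            * ((1 + X : ℚ[X]) ^ n * ∏ j, p a j ^ m j)).coeff (n - 1) := by
      intro m; rw [coeff_C_mul]
    rw [← Finset.mul_sum, Finset.sum_congr rfl fun m _ => hcoeff m, ← finset_sum_coeff]
    have hfac : ∑ m ∈ piAntidiag (univ : Finset (Fin (2 * a))) n,
        C ((Nat.multinomial Finset.univ m : ℚ) * ((n : ℚ) - (m ⟨2 * a - 1, ha2⟩ : ℚ)))
          * ((1 + X : ℚ[X]) ^ n * ∏ j, p a j ^ m j)
        = (1 + X : ℚ[X]) ^ n *
          ∑ m ∈ piAntidiag (univ : Finset (Fin (2 * a))) n,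
            C ((Nat.multinomial Finset.univ m : ℚ) * ((n : ℚ) - (m ⟨2 * a - 1, ha2⟩ : ℚ)))
              * ∏ j, p a j ^ m j := by
      rw [Finset.mul_sum]
      exact Finset.sum_congr rfl fun m _ => by ring
    rw [hfac, S3 a n ⟨2 * a - 1, ha2⟩]
    have hpt : p a ⟨2 * a - 1, ha2⟩ = (1 + X) ^ (2 * a) := by
      have h2a : (⟨2 * a - 1, ha2⟩ : Fin (2 * a)).1 + 1 = 2 * a := by
        show 2 * a - 1 + 1 = 2 * a; omega
      rw [p, h2a]
      exact Even.neg_pow ⟨a, by ring⟩ _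
    have hbig : (1 + X : ℚ[X]) ^ n
          * ((n : ℚ[X]) * P a ^ n - (n : ℚ[X]) * p a ⟨2 * a - 1, ha2⟩ * P a ^ (n - 1))
        = C (n : ℚ) * (((1 + X) ^ n * V a ^ n) * X ^ n)
          - C (n : ℚ) * (((1 + X) ^ (n + 2 * a) * V a ^ (n - 1)) * X ^ (n - 1)) := by
      rw [hpt, P_eq, C_eq_natCast, mul_pow, mul_pow, pow_add]
      ring
    rw [hbig, coeff_sub, coeff_C_mul, coeff_C_mul, coeff_mul_X_pow', coeff_mul_X_pow',
      if_neg (by omega), if_pos (le_refl _)]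
    have hev : (((1 + X : ℚ[X]) ^ (n + 2 * a) * V a ^ (n - 1))).coeff (n - 1 - (n - 1))
        = (a : ℚ) ^ (n - 1) := by
      rw [Nat.sub_self, coeff_zero_eq_eval_zero]
      simp [V, eval_finset_sum]
    rw [hev]
    field_simp
    ring
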